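/- Γ-liminf inequality for the discretised regularised functionals: Under the discretised regularisation setting, let {σ_n} ⊆ X with σ_n → σ in X. Then F_0(σ) ≤ liminf_n F_n(σ_n). -/

import Mathlib

open Filter Topology
open scoped ENNReal

/-- Γ-liminf inequality for the discretised regularised functionals:
if `σs n → σ` in `X`, then `F0 σ ≤ liminf_n F n (σs n)`. -/
theorem gamma_liminf_discretised
    {X Y : Type*} [MetricSpace X] [NormedAddCommGroup Y] [NormedSpace ℝ Y]
    (Λ : X → Y) (hΛ : Continuous Λ) (σ0 : X)
    (R : X → ℝ≥0∞) (hRlsc : LowerSemicontinuous R)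
    (α γ a ε0 : ℝ)
    (hα : 0 < α) (hγ : 0 < γ) (hγα : γ < α) (ha : 0 < a) (hε0 : 0 < ε0)
    (ε : ℕ → ℝ) (hεpos : ∀ n : ℕ, 0 < ε n) (hεle : ∀ n : ℕ, ε n ≤ ε0)
    (hεlim : Tendsto ε atTop (𝓝 0))
    (Lam : ℕ → Y) (hLam : ∀ n : ℕ, ‖Lam n - Λ σ0‖ ≤ ε n)
    (Xn : ℕ → Set X)
    (F : ℕ → X → ℝ≥0∞)
    (hFin : ∀ n : ℕ, ∀ σ ∈ Xn n, F n σ =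
      ENNReal.ofReal (‖Λ σ - Lam n‖ ^ α / ε n ^ γ) + ENNReal.ofReal a * R σ)
    (hFout : ∀ n : ℕ, ∀ σ ∉ Xn n, F n σ = ⊤)
    (F0 : X → ℝ≥0∞)
    (hF0in : ∀ σ : X, ‖Λ σ - Λ σ0‖ = 0 → F0 σ = ENNReal.ofReal a * R σ)
    (hF0out : ∀ σ : X, ‖Λ σ - Λ σ0‖ ≠ 0 → F0 σ = ⊤)
    (σs : ℕ → X) (σ : X) (hσ : Tendsto σs atTop (𝓝 σ)) :
    F0 σ ≤ liminf (fun n => F n (σs n)) atTop := by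
  -- Λ(σs n) → Λ σ and Lam n → Λ σ0
  have hΛσs : Tendsto (fun n => Λ (σs n)) atTop (𝓝 (Λ σ)) :=
    (hΛ.tendsto σ).comp hσ
  have hLamlim : Tendsto Lam atTop (𝓝 (Λ σ0)) := by
    rw [tendsto_iff_norm_sub_tendsto_zero]
    exact squeeze_zero (fun n => norm_nonneg _) hLam hεlim
  have hnormlim : Tendsto (fun n => ‖Λ (σs n) - Lam n‖) atTop (𝓝 ‖Λ σ - Λ σ0‖) :=
    (hΛσs.sub hLamlim).norm
  by_cases h0 : ‖Λ σ - Λ σ0‖ = 0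
  · -- case Λ σ = Λ σ0 : F0 σ = a • R σ
    rw [hF0in σ h0]
    have hbound : ∀ n, ENNReal.ofReal a * R (σs n) ≤ F n (σs n) := by
      intro n
      by_cases hmem : σs n ∈ Xn n
      · rw [hFin n _ hmem]; exact le_add_self
      · rw [hFout n _ hmem]; exact le_top
    have h1 : ENNReal.ofReal a * R σ ≤
        liminf (fun n => ENNReal.ofReal a * R (σs n)) atTop := by
      have hls : R σ ≤ liminf (fun n => R (σs n)) atTop := by
        have := LowerSemicontinuousAt.le_liminf (hRlsc σ)
        calc R σ ≤ liminf R (𝓝 σ) := this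
          _ ≤ liminf R (map σs atTop) := liminf_le_liminf_of_le hσ
          _ = liminf (fun n => R (σs n)) atTop := (Filter.liminf_comp R σs atTop).symm
      calc ENNReal.ofReal a * R σ
          ≤ liminf (fun _ : ℕ => ENNReal.ofReal a) atTop *
            liminf (fun n => R (σs n)) atTop := by
            rw [liminf_const]; gcongr
        _ ≤ liminf ((fun _ : ℕ => ENNReal.ofReal a) * fun n => R (σs n)) atTop :=
            ENNReal.le_liminf_mul
        _ = liminf (fun n => ENNReal.ofReal a * R (σs n)) atTop := rfl
    exact h1.trans (liminf_le_liminf (Eventually.of_forall hbound))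
  · -- case Λ σ ≠ Λ σ0 : F n (σs n) → ⊤
    rw [hF0out σ h0]
    have hc : 0 < ‖Λ σ - Λ σ0‖ := lt_of_le_of_ne (norm_nonneg _) (Ne.symm h0)
    -- the quotient tends to atTop
    have hnum : Tendsto (fun n => ‖Λ (σs n) - Lam n‖ ^ α) atTop
        (𝓝 (‖Λ σ - Λ σ0‖ ^ α)) := by
      have : ContinuousAt (fun x : ℝ => x ^ α) ‖Λ σ - Λ σ0‖ :=
        Real.continuousAt_rpow_const _ _ (Or.inl hc.ne')
      exact this.tendsto.comp hnormlim
    have hden : Tendsto (fun n => ε n ^ γ) atTop (𝓝[>] (0 : ℝ)) := by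
      rw [tendsto_nhdsWithin_iff]
      constructor
      · have : ContinuousAt (fun x : ℝ => x ^ γ) 0 :=
          Real.continuousAt_rpow_const _ _ (Or.inr hγ.le)
        have := this.tendsto.comp hεlim
        simpa [Function.comp_def, Real.zero_rpow hγ.ne'] using this
      · exact Eventually.of_forall fun n => Real.rpow_pos_of_pos (hεpos n) γ
    have hq : Tendsto (fun n => ‖Λ (σs n) - Lam n‖ ^ α / ε n ^ γ) atTop atTop := by
      have hinv : Tendsto (fun n => (ε n ^ γ)⁻¹) atTop atTop :=
        tendsto_inv_nhdsGT_zero.comp hden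
      simpa [div_eq_mul_inv] using
        Filter.Tendsto.pos_mul_atTop (Real.rpow_pos_of_pos hc α) hnum hinv
    have htop : Tendsto (fun n => ENNReal.ofReal (‖Λ (σs n) - Lam n‖ ^ α / ε n ^ γ))
        atTop (𝓝 ⊤) := ENNReal.tendsto_ofReal_atTop.comp hq
    have hbound : ∀ n, ENNReal.ofReal (‖Λ (σs n) - Lam n‖ ^ α / ε n ^ γ) ≤ F n (σs n) := by
      intro n
      by_cases hmem : σs n ∈ Xn n
      · rw [hFin n _ hmem]; exact le_self_add
      · rw [hFout n _ hmem]; exact le_top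
    calc (⊤ : ℝ≥0∞) = liminf (fun n => ENNReal.ofReal (‖Λ (σs n) - Lam n‖ ^ α / ε n ^ γ))
          atTop := (htop.liminf_eq).symm
      _ ≤ liminf (fun n => F n (σs n)) atTop := liminf_le_liminf (Eventually.of_forall hbound)
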